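/- arXiv:0905.1300 — 3 statements merged into one kernel-verified Lean document; each statement's English description precedes it below -/
import Mathlib

section
/- Let P be a Hermitian operator on a finite-dimensional complex inner product space satisfying 0 ≤ P ≤ 1 (i.e., P is positive semidefinite and 1 - P is positive semidefinite). Then for every real number η > 0, exp(-η P) ≤ 1 - η·exp(-η)·P in the Loewner order. -/
open Matrix
open scoped ComplexOrder

lemma scalar_exp_ineq {η x : ℝ} (hη : 0 < η) (hx0 : 0 ≤ x) (hx1 : x ≤ 1) :
    0 ≤ 1 - η * Real.exp (-η) * x - Real.exp (-η * x) := by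
  have hconv := convexOn_exp.2 (Set.mem_univ (0 : ℝ)) (Set.mem_univ (-η))
    (show (0:ℝ) ≤ 1 - x by linarith) hx0 (by ring)
  simp only [smul_eq_mul, mul_zero, zero_add, Real.exp_zero, mul_one] at hconv
  have h1 : η + 1 ≤ Real.exp η := Real.add_one_le_exp η
  have h2 : Real.exp (-η) * Real.exp η = 1 := by
    rw [← Real.exp_add]; simp
  have h3 : (0:ℝ) < Real.exp (-η) := Real.exp_pos _
  rw [mul_comm] at hconv
  have h4 : (η + 1) * Real.exp (-η) ≤ 1 := by nlinarith
  nlinarith [mul_nonneg hx0 (by nlinarith : (0:ℝ) ≤ 1 - (η + 1) * Real.exp (-η))]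

/-- **Lemma (matrix exponential inequality).**
Let `P` be a Hermitian operator with `0 ≤ P ≤ 1` (both `P` and `1 - P` positive
semidefinite). Then for every real `η > 0`, `exp(-η P) ≤ 1 - η·exp(-η)·P` in the
Loewner order, i.e. `1 - η·exp(-η)·P - exp(-ηP)` is positive semidefinite. -/
theorem matrix_exp_inequality {n : Type*} [Fintype n] [DecidableEq n]
    (P : Matrix n n ℂ) (hP : P.PosSemidef) (hP1 : ((1 : Matrix n n ℂ) - P).PosSemidef)
    (η : ℝ) (hη : 0 < η) :
    ((1 : Matrix n n ℂ) - (η * Real.exp (-η)) • P - NormedSpace.exp ((-η) • P)).PosSemidef := by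
  have hH := hP.1
  set U : Matrix n n ℂ := (hH.eigenvectorUnitary : Matrix n n ℂ) with hU
  have hUU : star U * U = 1 := Matrix.mem_unitaryGroup_iff'.mp hH.eigenvectorUnitary.2
  have hUU' : U * star U = 1 := Matrix.mem_unitaryGroup_iff.mp hH.eigenvectorUnitary.2
  have hUinv : U⁻¹ = star U := Matrix.inv_eq_right_inv hUU'
  have hUnit : IsUnit U := by
    haveI := invertibleOfRightInverse (a := U) (b := star U) (h := hUU')
    exact isUnit_of_invertible U
  set lam : n → ℝ := hH.eigenvalues with hlam
  -- eigenvalues in [0,1]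
  have hle0 : ∀ i, 0 ≤ lam i := hP.eigenvalues_nonneg
  have hle1 : ∀ i, lam i ≤ 1 := by
    intro i
    set v : n → ℂ := ⇑(hH.eigenvectorBasis i) with hv
    have key := hP1.dotProduct_mulVec_nonneg v
    have hmv : P *ᵥ v = lam i • v := hH.mulVec_eigenvectorBasis i
    have hnorm : star v ⬝ᵥ v = 1 := by
      rw [hv, dotProduct_comm, ← EuclideanSpace.inner_eq_star_dotProduct, inner_self_eq_norm_sq_to_K,
        hH.eigenvectorBasis.orthonormal.1 i]
      simp
    rw [Matrix.sub_mulVec, Matrix.one_mulVec, dotProduct_sub, hmv, dotProduct_smul,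
      hnorm, Complex.real_smul, mul_one] at key
    have h := (Complex.le_def.mp key).1
    simp only [Complex.sub_re, Complex.one_re, Complex.ofReal_re, Complex.zero_re,
      Complex.real_smul, Complex.ofReal_mul, Complex.mul_re, Complex.ofReal_im] at h
    · linarith
  have hspec := hH.spectral_theorem
  rw [Unitary.conjStarAlgAut_apply, ← hU] at hspec
  set D : Matrix n n ℂ := diagonal (RCLike.ofReal ∘ lam) with hD
  -- compute the exponential
  have hexp : NormedSpace.exp ((-η) • P)
      = U * diagonal (fun i => (Real.exp (-η * lam i) : ℂ)) * star U := by
    have : (-η : ℂ) • P = U * ((-η : ℂ) • D) * U⁻¹ := by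
      rw [hUinv, hspec]
      simp only [Matrix.smul_mul, Matrix.mul_smul]
    have hsmul : ((-η : ℝ)) • P = (-η : ℂ) • P := by
      ext i j; simp [Complex.real_smul]
    rw [hsmul, this, Matrix.exp_conj U _ hUnit, hUinv]
    congr 1
    congr 1
    rw [hD, ← Matrix.diagonal_smul, Matrix.exp_diagonal]
    refine congrArg diagonal (funext fun i => ?_)
    rw [Pi.coe_exp, Pi.smul_apply, Function.comp_apply, ← Complex.exp_eq_exp_ℂ, smul_eq_mul]
    rw [show ((-η : ℂ) * (RCLike.ofReal (lam i) : ℂ)) = ((-η * lam i : ℝ) : ℂ) by push_cast; rfl,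
      ← Complex.ofReal_exp]
  -- rewrite the whole expression as a conjugated diagonal
  have hmain : ((1 : Matrix n n ℂ) - (η * Real.exp (-η)) • P - NormedSpace.exp ((-η) • P))
      = U * diagonal (fun i =>
          ((1 - η * Real.exp (-η) * lam i - Real.exp (-η * lam i) : ℝ) : ℂ)) * star U := by
    rw [hexp]
    nth_rewrite 1 [hspec]
    have h1 : (1 : Matrix n n ℂ) = U * 1 * star U := by rw [mul_one, hUU']
    nth_rewrite 1 [h1]
    have hs : (η * Real.exp (-η)) • (U * D * star U) = U * ((η * Real.exp (-η)) • D) * star U := by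
      simp only [Matrix.smul_mul, Matrix.mul_smul]
    rw [hs, ← Matrix.sub_mul, ← Matrix.mul_sub, ← Matrix.sub_mul, ← Matrix.mul_sub]
    congr 2
    rw [hD]
    ext i j
    rcases eq_or_ne i j with rfl | hij
    · simp only [Matrix.sub_apply, Matrix.one_apply_eq, Matrix.smul_apply,
        Matrix.diagonal_apply_eq, Function.comp_apply, Complex.real_smul, RCLike.ofReal_real_eq_id,
        id_eq]
      push_cast
      norm_num [mul_comm]
    · simp [Matrix.one_apply_ne hij, Matrix.diagonal_apply_ne _ hij]
  rw [hmain]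
  apply Matrix.PosSemidef.mul_mul_conjTranspose_same
  · refine Matrix.posSemidef_diagonal_iff.mpr fun i => ?_
    rw [Complex.zero_le_real]
    exact scalar_exp_ineq hη (hle0 i) (hle1 i)
end

section
/- Let R₀, R₁ be positive semidefinite operators on a finite-dimensional complex Hilbert space W. Then ‖R₀ - R₁‖₁ ≤ √(2·Tr(R₀)² + 2·Tr(R₁)² - 4·F(R₀,R₁)²), where F(R₀,R₁) = ‖√R₀ · √R₁‖₁ is the fidelity. -/
open Matrix
open scoped ComplexOrder

open scoped Classical in
/-- The positive semidefinite square root (junk value `0` off the PSD matrices). -/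
noncomputable def psdSqrt {n : Type*} [Fintype n] [DecidableEq n]
    (A : Matrix n n ℂ) : Matrix n n ℂ :=
  if h : A.PosSemidef then
    h.1.eigenvectorUnitary.1 * diagonal ((↑) ∘ (√·) ∘ h.1.eigenvalues) *
      (star h.1.eigenvectorUnitary : Matrix n n ℂ)
  else 0

/-- The trace norm `‖A‖₁ = Tr √(AᴴA)`. -/
noncomputable def traceNorm {m n : Type*} [Fintype m] [Fintype n] [DecidableEq n]
    (A : Matrix m n ℂ) : ℝ :=
  ((psdSqrt (Aᴴ * A)).trace).re

/-- The fidelity `F(P,Q) = ‖√P √Q‖₁` of positive semidefinite operators. -/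
noncomputable def fidelity {n : Type*} [Fintype n] [DecidableEq n]
    (P Q : Matrix n n ℂ) : ℝ :=
  traceNorm (psdSqrt P * psdSqrt Q)

set_option linter.unusedSectionVars false

section Aux
variable {W : Type*} [Fintype W] [DecidableEq W]

open scoped MatrixOrder in
lemma psdSqrt_eq_sqrt {A : Matrix W W ℂ} (hA : A.PosSemidef) : psdSqrt A = CFC.sqrt A := by
  rw [CFC.sqrt_eq_real_sqrt A (Matrix.nonneg_iff_posSemidef.mpr hA), cfcₙ_eq_cfc,
    hA.1.cfc_eq, psdSqrt, dif_pos hA]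
  rfl

open scoped MatrixOrder in
lemma psdSqrt_posSemidef {A : Matrix W W ℂ} (hA : A.PosSemidef) :
    (psdSqrt A).PosSemidef ∧ psdSqrt A * psdSqrt A = A := by
  rw [psdSqrt_eq_sqrt hA]
  exact ⟨Matrix.nonneg_iff_posSemidef.mp (CFC.sqrt_nonneg A),
    CFC.sqrt_mul_sqrt_self A (Matrix.nonneg_iff_posSemidef.mpr hA)⟩

open scoped MatrixOrder in
lemma psdSqrt_eq {A B : Matrix W W ℂ} (hB : B.PosSemidef) (h : B * B = A) :
    psdSqrt A = B := by
  have hA : A.PosSemidef := by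
    have := hB.pow 2
    rwa [pow_two, h] at this
  rw [psdSqrt_eq_sqrt hA]
  exact CFC.sqrt_unique h (Matrix.nonneg_iff_posSemidef.mpr hB)

noncomputable def toE (M : Matrix W W ℂ) : EuclideanSpace ℂ (W × W) :=
  (WithLp.equiv 2 _).symm (fun p => M p.1 p.2)

lemma frob_inner_eq (M N : Matrix W W ℂ) :
    (inner ℂ (toE M) (toE N) : ℂ) = (Mᴴ * N).trace := by
  simp only [toE, PiLp.inner_apply, RCLike.inner_apply, Matrix.trace, Matrix.diag,
    Matrix.mul_apply, Matrix.conjTranspose_apply, Fintype.sum_prod_type,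
    WithLp.equiv_symm_apply, PiLp.toLp_apply]
  rw [Finset.sum_comm]
  exact Finset.sum_congr rfl fun _ _ => Finset.sum_congr rfl fun _ _ => mul_comm _ _

lemma frob_self_re_nonneg (M : Matrix W W ℂ) : 0 ≤ ((Mᴴ * M).trace).re := by
  rw [← frob_inner_eq]
  exact inner_self_nonneg (𝕜 := ℂ) (x := toE M)

lemma frob_cs (X Y : Matrix W W ℂ) :
    ((Xᴴ * Y).trace).re ≤
      Real.sqrt ((Xᴴ * X).trace).re * Real.sqrt ((Yᴴ * Y).trace).re := by
  set x := toE X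
  set y := toE Y
  have h1 : ((Xᴴ * Y).trace).re = (inner ℂ x y : ℂ).re := by rw [frob_inner_eq]
  have h2 : Real.sqrt ((Xᴴ * X).trace).re = ‖x‖ := by
    rw [← frob_inner_eq, @norm_eq_sqrt_re_inner ℂ]; rfl
  have h3 : Real.sqrt ((Yᴴ * Y).trace).re = ‖y‖ := by
    rw [← frob_inner_eq, @norm_eq_sqrt_re_inner ℂ]; rfl
  rw [h1, h2, h3]
  calc (inner ℂ x y : ℂ).re ≤ ‖(inner ℂ x y : ℂ)‖ := Complex.re_le_norm _
    _ ≤ ‖x‖ * ‖y‖ := norm_inner_le_norm x y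

end Aux

section Aux2
variable {W : Type*} [Fintype W] [DecidableEq W]

example : (RCLike.ofReal : ℝ → ℂ) = Complex.ofReal := rfl

lemma conj_diag_mul {V : Matrix W W ℂ} (hV : Vᴴ * V = 1) (f g : W → ℂ) :
    (V * (Matrix.diagonal f * Vᴴ)) * (V * (Matrix.diagonal g * Vᴴ))
      = V * (Matrix.diagonal (f * g) * Vᴴ) := by
  have h : Vᴴ * (V * (Matrix.diagonal g * Vᴴ)) = Matrix.diagonal g * Vᴴ := by
    rw [← Matrix.mul_assoc, hV, Matrix.one_mul]
  calc (V * (Matrix.diagonal f * Vᴴ)) * (V * (Matrix.diagonal g * Vᴴ))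
      = V * (Matrix.diagonal f * (Vᴴ * (V * (Matrix.diagonal g * Vᴴ)))) := by
        simp only [Matrix.mul_assoc]
    _ = V * (Matrix.diagonal f * (Matrix.diagonal g * Vᴴ)) := by rw [h]
    _ = V * (Matrix.diagonal (f * g) * Vᴴ) := by
        rw [← Matrix.mul_assoc (Matrix.diagonal f), Matrix.diagonal_mul_diagonal]
        rfl

lemma conj_diag_trace {V : Matrix W W ℂ} (hV : Vᴴ * V = 1) (f : W → ℂ) :
    (V * (Matrix.diagonal f * Vᴴ)).trace = ∑ i, f i := by
  rw [Matrix.trace_mul_comm, Matrix.mul_assoc, hV, Matrix.mul_one, Matrix.trace_diagonal]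

lemma conj_diag_psd (V : Matrix W W ℂ) (f : W → ℝ) (hf : ∀ i, 0 ≤ f i) :
    (V * (Matrix.diagonal (fun i => (f i : ℂ)) * Vᴴ)).PosSemidef := by
  rw [← Matrix.mul_assoc]
  exact (Matrix.posSemidef_diagonal_iff.mpr fun i => by
    exact_mod_cast hf i).mul_mul_conjTranspose_same V

lemma re_sum_ofReal (f : W → ℝ) : (∑ i, (f i : ℂ)).re = ∑ i, f i := by
  rw [← Complex.ofReal_sum, Complex.ofReal_re]

lemma exists_dual {Δ : Matrix W W ℂ} (hΔ : Δ.IsHermitian) :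
    ∃ S : Matrix W W ℂ, Sᴴ = S ∧ Sᴴ * S = 1 ∧ ((S * Δ).trace).re = traceNorm Δ := by
  set V : Matrix W W ℂ := (hΔ.eigenvectorUnitary : Matrix W W ℂ) with hVdef
  have hV1 : Vᴴ * V = 1 := by
    simpa [Matrix.star_eq_conjTranspose] using
      Matrix.mem_unitaryGroup_iff'.mp (hΔ.eigenvectorUnitary).2
  have hV2 : V * Vᴴ = 1 := by
    simpa [Matrix.star_eq_conjTranspose] using
      Matrix.mem_unitaryGroup_iff.mp (hΔ.eigenvectorUnitary).2
  set d : W → ℝ := hΔ.eigenvalues with hddef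
  have spec : Δ = V * (Matrix.diagonal (fun i => (d i : ℂ)) * Vᴴ) := by
    have h := hΔ.spectral_theorem
    rw [Unitary.conjStarAlgAut_apply, Matrix.mul_assoc] at h
    exact h
  set s : W → ℝ := fun i => if 0 ≤ d i then 1 else -1 with hsdef
  set S : Matrix W W ℂ := V * (Matrix.diagonal (fun i => (s i : ℂ)) * Vᴴ) with hSdef
  have hdstar : (Matrix.diagonal (fun i => (s i : ℂ)))ᴴ = Matrix.diagonal (fun i => (s i : ℂ)) := by
    rw [Matrix.diagonal_conjTranspose]
    have hst : (star fun i => (s i : ℂ)) = fun i => (s i : ℂ) := by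
      funext i
      exact Complex.conj_ofReal _
    rw [hst]
  have hSH : Sᴴ = S := by
    rw [hSdef, Matrix.conjTranspose_mul, Matrix.conjTranspose_mul, hdstar,
      Matrix.conjTranspose_conjTranspose, Matrix.mul_assoc]
  have hs2 : ∀ i, (s i : ℂ) * (s i : ℂ) = 1 := by
    intro i
    rw [hsdef]
    by_cases h : 0 ≤ d i <;> simp [h]
  have hSU : Sᴴ * S = 1 := by
    rw [hSH, hSdef, conj_diag_mul hV1]
    have : ((fun i => (s i : ℂ)) * fun i => (s i : ℂ)) = fun _ => (1 : ℂ) := by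
      funext i; exact hs2 i
    rw [this]
    simpa [Matrix.diagonal_one] using hV2
  refine ⟨S, hSH, hSU, ?_⟩
  have habs : ∀ i, s i * d i = |d i| := by
    intro i
    rw [hsdef]
    by_cases h : 0 ≤ d i
    · simp [h, abs_of_nonneg h]
    · simp [h, abs_of_neg (lt_of_not_ge h)]
  have htr : ((S * Δ).trace).re = ∑ i, |d i| := by
    rw [hSdef]
    conv_lhs => rw [spec]
    rw [conj_diag_mul hV1, conj_diag_trace hV1]
    have : ∀ i, ((fun i => (s i : ℂ)) * fun i => (d i : ℂ)) i = ((s i * d i : ℝ) : ℂ) := by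
      intro i; push_cast; rfl
    rw [Finset.sum_congr rfl fun i _ => this i, re_sum_ofReal]
    exact Finset.sum_congr rfl fun i _ => habs i
  have hfun : ((fun i => ((|d i| : ℝ) : ℂ)) * fun i => ((|d i| : ℝ) : ℂ))
      = ((fun i => ((d i : ℝ) : ℂ)) * fun i => ((d i : ℝ) : ℂ)) := by
    funext i
    simp only [Pi.mul_apply]
    norm_cast
    exact abs_mul_abs_self _
  have hsq : Δᴴ * Δ = V * (Matrix.diagonal (fun i => ((|d i| : ℝ) : ℂ)) * Vᴴ) *
      (V * (Matrix.diagonal (fun i => ((|d i| : ℝ) : ℂ)) * Vᴴ)) := by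
    rw [hΔ.eq]
    conv_lhs => rw [spec]
    rw [conj_diag_mul hV1, conj_diag_mul hV1, hfun]
  have hpsd := conj_diag_psd V (fun i => |d i|) (fun i => abs_nonneg _)
  have : psdSqrt (Δᴴ * Δ) = V * (Matrix.diagonal (fun i => ((|d i| : ℝ) : ℂ)) * Vᴴ) :=
    psdSqrt_eq hpsd hsq.symm
  rw [traceNorm, this, conj_diag_trace hV1, re_sum_ofReal, htr]
end Aux2

section Aux3
variable {W : Type*} [Fintype W] [DecidableEq W]

set_option maxHeartbeats 2000000 in
lemma exists_polar (T : Matrix W W ℂ) :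
    ∃ U : Matrix W W ℂ, Uᴴ * U = 1 ∧ ((Uᴴ * T).trace).re = traceNorm T := by
  have hH : (Tᴴ * T).PosSemidef := Matrix.posSemidef_conjTranspose_mul_self T
  have hHer := hH.isHermitian
  set V : Matrix W W ℂ := (hHer.eigenvectorUnitary : Matrix W W ℂ) with hVdef
  have hV1 : Vᴴ * V = 1 := by
    simpa [Matrix.star_eq_conjTranspose] using
      Matrix.mem_unitaryGroup_iff'.mp (hHer.eigenvectorUnitary).2
  have hV2 : V * Vᴴ = 1 := by
    simpa [Matrix.star_eq_conjTranspose] using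
      Matrix.mem_unitaryGroup_iff.mp (hHer.eigenvectorUnitary).2
  set d : W → ℝ := hHer.eigenvalues with hddef
  have hd : ∀ i, 0 ≤ d i := hH.eigenvalues_nonneg
  have spec : Tᴴ * T = V * (Matrix.diagonal (fun i => (d i : ℂ)) * Vᴴ) := by
    have h := hHer.spectral_theorem
    rw [Unitary.conjStarAlgAut_apply, Matrix.mul_assoc] at h
    exact h
  have hsqrtfun : ((fun i => ((Real.sqrt (d i) : ℝ) : ℂ)) * fun i => ((Real.sqrt (d i) : ℝ) : ℂ))
      = fun i => ((d i : ℝ) : ℂ) := by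
    funext i
    simp only [Pi.mul_apply]
    norm_cast
    exact Real.mul_self_sqrt (hd i)
  have hTN : traceNorm T = ∑ i, Real.sqrt (d i) := by
    have hpsd := conj_diag_psd V (fun i => Real.sqrt (d i)) (fun i => Real.sqrt_nonneg _)
    have hsq : (V * (Matrix.diagonal (fun i => ((Real.sqrt (d i) : ℝ) : ℂ)) * Vᴴ)) *
        (V * (Matrix.diagonal (fun i => ((Real.sqrt (d i) : ℝ) : ℂ)) * Vᴴ)) = Tᴴ * T := by
      rw [conj_diag_mul hV1, hsqrtfun, ← spec]
    rw [traceNorm, psdSqrt_eq hpsd hsq, conj_diag_trace hV1, re_sum_ofReal]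
  set M : Matrix W W ℂ := T * V with hMdef
  have hMM : Mᴴ * M = Matrix.diagonal (fun i => (d i : ℂ)) := by
    rw [hMdef, Matrix.conjTranspose_mul]
    calc Vᴴ * Tᴴ * (T * V) = Vᴴ * ((Tᴴ * T) * V) := by simp only [Matrix.mul_assoc]
      _ = Vᴴ * (V * (Matrix.diagonal (fun i => (d i : ℂ)) * (Vᴴ * V))) := by
          rw [spec]; simp only [Matrix.mul_assoc]
      _ = Matrix.diagonal (fun i => (d i : ℂ)) := by
          rw [hV1, Matrix.mul_one, ← Matrix.mul_assoc, hV1, Matrix.one_mul]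
  set w : W → EuclideanSpace ℂ W := fun j => (WithLp.equiv 2 _).symm (fun i => M i j) with hwdef
  have hw : ∀ j k, (inner ℂ (w j) (w k) : ℂ) = Matrix.diagonal (fun i => (d i : ℂ)) j k := by
    intro j k
    rw [← hMM]
    simp only [hwdef, PiLp.inner_apply, RCLike.inner_apply, WithLp.equiv_symm_apply, PiLp.toLp_apply,
      Matrix.mul_apply, Matrix.conjTranspose_apply]
    exact Finset.sum_congr rfl fun _ _ => mul_comm _ _
  set v : W → EuclideanSpace ℂ W := fun j => (((Real.sqrt (d j) : ℂ))⁻¹ : ℂ) • w j with hvdef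
  have hortho : Orthonormal ℂ (Set.restrict {j | d j ≠ 0} v) := by
    rw [orthonormal_iff_ite]
    rintro ⟨j, hj⟩ ⟨k, hk⟩
    simp only [Set.restrict, Set.restrict_apply, hvdef, inner_smul_left, inner_smul_right, hw]
    by_cases hjk : j = k
    · subst hjk
      rw [if_pos rfl, Matrix.diagonal_apply_eq, map_inv₀, Complex.conj_ofReal]
      have hsne : Real.sqrt (d j) ≠ 0 := by
        rw [Real.sqrt_ne_zero' ]
        exact lt_of_le_of_ne (hd j) (Ne.symm hj)
      have : ((Real.sqrt (d j) : ℝ))⁻¹ * ((Real.sqrt (d j) : ℝ)⁻¹ * d j) = 1 := by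
        rw [← mul_assoc, ← mul_inv, Real.mul_self_sqrt (hd j),
          inv_mul_cancel₀ hj]
      norm_cast
    · rw [if_neg (by simpa using hjk), Matrix.diagonal_apply_ne _ hjk]
      simp
  obtain ⟨b, hb⟩ := hortho.exists_orthonormalBasis_extension_of_card_eq finrank_euclideanSpace
  set C : Matrix W W ℂ := Matrix.of (fun i j => b j i) with hCdef
  have hbo := b.orthonormal
  rw [orthonormal_iff_ite] at hbo
  have hC : Cᴴ * C = 1 := by
    ext j k
    have hik := hbo j k
    rw [PiLp.inner_apply] at hik
    simp only [RCLike.inner_apply] at hik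
    simp only [Matrix.mul_apply, Matrix.conjTranspose_apply, hCdef, Matrix.of_apply,
      Matrix.one_apply, starRingEnd_apply] at hik ⊢
    rw [← hik]; exact Finset.sum_congr rfl fun _ _ => mul_comm _ _
  refine ⟨C * Vᴴ, ?_, ?_⟩
  · rw [Matrix.conjTranspose_mul, Matrix.conjTranspose_conjTranspose]
    calc V * Cᴴ * (C * Vᴴ) = V * ((Cᴴ * C) * Vᴴ) := by simp only [Matrix.mul_assoc]
      _ = 1 := by rw [hC, Matrix.one_mul, hV2]
  · have h1 : (C * Vᴴ)ᴴ * T = V * (Cᴴ * T) := by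
      rw [Matrix.conjTranspose_mul, Matrix.conjTranspose_conjTranspose, Matrix.mul_assoc]
    have h3 : ((C * Vᴴ)ᴴ * T).trace = (Cᴴ * M).trace := by
      rw [h1, Matrix.trace_mul_comm, Matrix.mul_assoc, hMdef]
    have h2 : ((Cᴴ * M).trace) = ∑ j, ((Real.sqrt (d j) : ℝ) : ℂ) := by
      rw [Matrix.trace]
      apply Finset.sum_congr rfl
      intro j _
      have hip : (Matrix.diag (Cᴴ * M)) j = (inner ℂ (b j) (w j) : ℂ) := by
        simp only [Matrix.diag_apply, Matrix.mul_apply, Matrix.conjTranspose_apply, hCdef,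
          Matrix.of_apply, PiLp.inner_apply, RCLike.inner_apply, hwdef,
          WithLp.equiv_symm_apply, PiLp.toLp_apply, starRingEnd_apply]
        exact Finset.sum_congr rfl fun _ _ => mul_comm _ _
      rw [hip]
      by_cases hj : d j = 0
      · have h0 : (inner ℂ (w j) (w j) : ℂ) = 0 := by
          rw [hw j j, Matrix.diagonal_apply_eq, hj]
          norm_num
        have hwj : w j = 0 := inner_self_eq_zero.mp h0
        rw [hwj, inner_zero_right, hj, Real.sqrt_zero]
        norm_num
      · rw [hb j hj]
        simp only [hvdef]
        rw [inner_smul_left, hw j j, Matrix.diagonal_apply_eq, map_inv₀, Complex.conj_ofReal]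
        have : (Real.sqrt (d j))⁻¹ * d j = Real.sqrt (d j) := by
          rw [inv_mul_eq_div, Real.div_sqrt]
        norm_cast
    rw [h3, h2, re_sum_ofReal, hTN]
end Aux3


set_option maxHeartbeats 2000000 in
/-- For positive semidefinite `R₀, R₁` on a finite-dimensional complex Hilbert space,
`‖R₀ - R₁‖₁ ≤ √(2·Tr(R₀)² + 2·Tr(R₁)² - 4·F(R₀,R₁)²)`. -/
theorem traceNorm_sub_le_of_fidelity
    {W : Type*} [Fintype W] [DecidableEq W] (R₀ R₁ : Matrix W W ℂ)
    (h₀ : R₀.PosSemidef) (h₁ : R₁.PosSemidef) :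
    traceNorm (R₀ - R₁) ≤
      Real.sqrt (2 * R₀.trace.re ^ 2 + 2 * R₁.trace.re ^ 2 - 4 * fidelity R₀ R₁ ^ 2) := by
  have hA0 := psdSqrt_posSemidef h₀
  have hB0 := psdSqrt_posSemidef h₁
  set A := psdSqrt R₀ with hAdef
  set B := psdSqrt R₁ with hBdef
  have hAps : A.PosSemidef := by exact hA0.1
  have hBps : B.PosSemidef := by exact hB0.1
  have hAH : Aᴴ = A := hAps.isHermitian
  have hBH : Bᴴ = B := hBps.isHermitian
  have hAA : A * A = R₀ := by exact hA0.2
  have hBB : B * B = R₁ := by exact hB0.2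
  obtain ⟨U, hU, hUtr⟩ := exists_polar (A * B)
  have hΔH : (R₀ - R₁).IsHermitian := h₀.isHermitian.sub h₁.isHermitian
  obtain ⟨S, hSH, hSU, hStr⟩ := exists_dual hΔH
  set F : ℝ := fidelity R₀ R₁ with hFdef
  have hF : ((Uᴴ * (A * B)).trace).re = F := hUtr
  set a : ℝ := R₀.trace.re with hadef
  set b : ℝ := R₁.trace.re with hbdef
  set X : Matrix W W ℂ := A + B * Uᴴ with hXdef
  set Z : Matrix W W ℂ := A - B * Uᴴ with hZdef
  set Y : Matrix W W ℂ := S * Z with hYdef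
  have hXH : Xᴴ = A + U * B := by
    rw [hXdef, Matrix.conjTranspose_add, Matrix.conjTranspose_mul, hAH, hBH,
      Matrix.conjTranspose_conjTranspose]
  have hZH : Zᴴ = A - U * B := by
    rw [hZdef, Matrix.conjTranspose_sub, Matrix.conjTranspose_mul, hAH, hBH,
      Matrix.conjTranspose_conjTranspose]
  -- basic trace computations
  have htAA : (A * A).trace = R₀.trace := by rw [hAA]
  have htBB : (U * (B * (B * Uᴴ))).trace = R₁.trace := by
    rw [Matrix.trace_mul_comm]
    have : B * (B * Uᴴ) * U = R₁ := by
      simp only [Matrix.mul_assoc]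
      rw [hU, Matrix.mul_one, hBB]
    rw [this]
  have htASA : (A * (S * A)).trace = (S * R₀).trace := by
    rw [Matrix.trace_mul_comm, Matrix.mul_assoc, hAA]
  have htBSB : (U * (B * (S * (B * Uᴴ)))).trace = (S * R₁).trace := by
    rw [Matrix.trace_mul_comm]
    have : B * (S * (B * Uᴴ)) * U = B * (S * B) := by
      simp only [Matrix.mul_assoc]
      rw [hU, Matrix.mul_one]
    rw [this, Matrix.trace_mul_comm, Matrix.mul_assoc, hBB]
  set z : ℂ := (A * (S * (B * Uᴴ))).trace with hzdef
  set c : ℂ := (A * (B * Uᴴ)).trace with hcdef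
  have hzstar : (U * (B * (S * A))).trace = star z := by
    rw [hzdef, ← Matrix.trace_conjTranspose]
    congr 1
    simp only [Matrix.conjTranspose_mul, hAH, hBH, hSH, Matrix.conjTranspose_conjTranspose,
      Matrix.mul_assoc]
  have hcstar : (U * (B * A)).trace = star c := by
    rw [hcdef, ← Matrix.trace_conjTranspose]
    congr 1
    simp only [Matrix.conjTranspose_mul, hAH, hBH, Matrix.conjTranspose_conjTranspose,
      Matrix.mul_assoc]
  have hcre : c.re = F := by
    have hcq : c = (Uᴴ * (A * B)).trace := by
      rw [hcdef, ← Matrix.mul_assoc, Matrix.trace_mul_comm]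
    rw [hcq, hUtr]
    rfl
  -- expansion of Xᴴ * Y
  have hXY : Xᴴ * Y = A * (S * A) - A * (S * (B * Uᴴ))
      + (U * (B * (S * A)) - U * (B * (S * (B * Uᴴ)))) := by
    rw [hXH, hYdef, hZdef]
    noncomm_ring
  have hkey : ((Xᴴ * Y).trace).re = ((S * (R₀ - R₁)).trace).re := by
    have hc : (Xᴴ * Y).trace = (S * (R₀ - R₁)).trace + (star z - z) := by
      rw [hXY, Matrix.trace_add, Matrix.trace_sub, Matrix.trace_sub, htASA, htBSB,
        hzstar, ← hzdef, Matrix.mul_sub, Matrix.trace_sub]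
      ring
    rw [hc, Complex.add_re, Complex.sub_re, Complex.star_def, Complex.conj_re]
    ring
  -- norms
  have hXX : ((Xᴴ * X).trace).re = a + b + 2 * F := by
    have hexp : Xᴴ * X = A * A + A * (B * Uᴴ) + (U * (B * A) + U * (B * (B * Uᴴ))) := by
      rw [hXH, hXdef]
      noncomm_ring
    rw [hexp, Matrix.trace_add, Matrix.trace_add, Matrix.trace_add, htAA, htBB, hcstar, ← hcdef]
    simp only [Complex.add_re, Complex.star_def, Complex.conj_re]
    rw [hcre]
    ring
  have hYYeq : Yᴴ * Y = Zᴴ * Z := by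
    rw [hYdef, Matrix.conjTranspose_mul, Matrix.mul_assoc, ← Matrix.mul_assoc Sᴴ, hSU,
      Matrix.one_mul]
  have hZZ : ((Zᴴ * Z).trace).re = a + b - 2 * F := by
    have hexp : Zᴴ * Z = A * A - A * (B * Uᴴ) - (U * (B * A) - U * (B * (B * Uᴴ))) := by
      rw [hZH, hZdef]
      noncomm_ring
    rw [hexp, Matrix.trace_sub, Matrix.trace_sub, Matrix.trace_sub, htAA, htBB, hcstar, ← hcdef]
    simp only [Complex.sub_re, Complex.star_def, Complex.conj_re]
    rw [hcre]
    ring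
  have hXXnn : 0 ≤ a + b + 2 * F := by
    rw [← hXX]
    exact frob_self_re_nonneg X
  calc traceNorm (R₀ - R₁) = ((S * (R₀ - R₁)).trace).re := hStr.symm
    _ = ((Xᴴ * Y).trace).re := hkey.symm
    _ ≤ Real.sqrt ((Xᴴ * X).trace).re * Real.sqrt ((Yᴴ * Y).trace).re := frob_cs X Y
    _ = Real.sqrt (a + b + 2 * F) * Real.sqrt (a + b - 2 * F) := by
        rw [hXX, hYYeq, hZZ]
    _ = Real.sqrt ((a + b + 2 * F) * (a + b - 2 * F)) := (Real.sqrt_mul hXXnn _).symm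
    _ ≤ Real.sqrt (2 * a ^ 2 + 2 * b ^ 2 - 4 * F ^ 2) := Real.sqrt_le_sqrt (by nlinarith [sq_nonneg (a - b)])
end

section
/- For density operators ρ₀ and ρ₁ (positive semidefinite with trace 1) on a finite-dimensional complex Hilbert space, ‖ρ₀ - ρ₁‖₁ ≤ 2·√(1 - F(ρ₀,ρ₁)²), where F denotes the fidelity. -/
open Matrix
open scoped ComplexOrder

set_option linter.unusedSectionVars false

namespace FvdG

/-- Frobenius "squared norm". -/
noncomputable def frobSq {n : Type*} [Fintype n] (X : Matrix n n ℂ) : ℝ :=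
  ((Xᴴ * X).trace).re

noncomputable def mE {n : Type*} [Fintype n] (X : Matrix n n ℂ) :
    EuclideanSpace ℂ (n × n) :=
  (WithLp.equiv 2 _).symm fun p => X p.1 p.2

variable {n : Type*} [Fintype n] [DecidableEq n]

lemma inner_mE (X Y : Matrix n n ℂ) : (inner ℂ (mE X) (mE Y) : ℂ) = (Xᴴ * Y).trace := by
  simp only [mE, PiLp.inner_apply, RCLike.inner_apply, WithLp.equiv_symm_apply, PiLp.toLp_apply,
    Matrix.trace, Matrix.diag, Matrix.mul_apply, Matrix.conjTranspose_apply]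
  rw [Fintype.sum_prod_type]
  rw [Finset.sum_comm]
  exact Finset.sum_congr rfl fun _ _ => Finset.sum_congr rfl fun _ _ => mul_comm _ _

lemma norm_mE (X : Matrix n n ℂ) : ‖mE X‖ ^ 2 = frobSq X := by
  rw [norm_sq_eq_re_inner (𝕜 := ℂ)]
  rw [frobSq, ← inner_mE]
  rfl

lemma frobSq_nonneg (X : Matrix n n ℂ) : 0 ≤ frobSq X := by
  rw [← norm_mE]; positivity

lemma norm_mE' (X : Matrix n n ℂ) : ‖mE X‖ = Real.sqrt (frobSq X) := by
  rw [← norm_mE]; rw [Real.sqrt_sq (norm_nonneg _)]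

/-- Cauchy–Schwarz for the trace inner product. -/
lemma re_trace_le (X Y : Matrix n n ℂ) :
    ((Xᴴ * Y).trace).re ≤ Real.sqrt (frobSq X) * Real.sqrt (frobSq Y) := by
  rw [← inner_mE, ← norm_mE', ← norm_mE']
  calc (inner ℂ (mE X) (mE Y) : ℂ).re ≤ ‖(inner ℂ (mE X) (mE Y) : ℂ)‖ := Complex.re_le_norm _
    _ ≤ _ := norm_inner_le_norm _ _

lemma frobSq_mul_coisometry (Z S : Matrix n n ℂ) (hS : S * Sᴴ = 1) :
    frobSq (Z * S) = frobSq Z := by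
  unfold frobSq
  rw [conjTranspose_mul,
    show Sᴴ * Zᴴ * (Z * S) = Sᴴ * (Zᴴ * Z * S) by simp only [mul_assoc],
    trace_mul_comm, show Zᴴ * Z * S * Sᴴ = Zᴴ * Z * (S * Sᴴ) by simp only [mul_assoc],
    hS, mul_one]

open scoped MatrixOrder

lemma psdSqrt_eq {A : Matrix n n ℂ} (h : A.PosSemidef) : psdSqrt A = CFC.sqrt A := by
  rw [psdSqrt, dif_pos h, CFC.sqrt_eq_cfc, cfc_nnreal_eq_real _ A, h.1.cfc_eq, IsHermitian.cfc,
    Unitary.conjStarAlgAut_apply]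
  congr 3
  funext i
  simp [h.eigenvalues_nonneg i]

lemma psdSqrt_of_sq {A B : Matrix n n ℂ} (hB : B.PosSemidef) (hA : A.PosSemidef)
    (h : A * A = B) : psdSqrt B = A := by
  rw [psdSqrt_eq hB]
  exact (CFC.sqrt_eq_iff B A hB.nonneg hA.nonneg).2 h

lemma psdSqrt_posSemidef {A : Matrix n n ℂ} (h : A.PosSemidef) : (psdSqrt A).PosSemidef := by
  rw [psdSqrt_eq h]; exact (CFC.sqrt_nonneg A).posSemidef

lemma psdSqrt_mul_self {A : Matrix n n ℂ} (h : A.PosSemidef) : psdSqrt A * psdSqrt A = A := by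
  rw [psdSqrt_eq h]; exact CFC.sqrt_mul_sqrt_self A h.nonneg

lemma mulmul (U : Matrix n n ℂ) (hU1 : Uᴴ * U = 1) (f g : n → ℂ) :
    (U * diagonal f * Uᴴ) * (U * diagonal g * Uᴴ) = U * diagonal (f * g) * Uᴴ := by
  rw [show (U * diagonal f * Uᴴ) * (U * diagonal g * Uᴴ)
      = U * (diagonal f * ((Uᴴ * U) * diagonal g)) * Uᴴ by simp only [mul_assoc],
    hU1, one_mul, diagonal_mul_diagonal]
  rfl

lemma traceUDU (U : Matrix n n ℂ) (hU1 : Uᴴ * U = 1) (f : n → ℂ) :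
    (U * diagonal f * Uᴴ).trace = ∑ i, f i := by
  rw [trace_mul_cycle, hU1, one_mul, trace_diagonal]

/-- duality for the trace norm of a Hermitian matrix: a coisometry `S`
with `re tr (Δ * S) = ‖Δ‖₁`. -/
lemma exists_sign_dual (Δ : Matrix n n ℂ) (hΔ : Δ.IsHermitian) :
    ∃ S : Matrix n n ℂ, S * Sᴴ = 1 ∧ ((Δ * S).trace).re = traceNorm Δ := by
  set U : Matrix n n ℂ := (hΔ.eigenvectorUnitary : Matrix n n ℂ)
  set d : n → ℝ := hΔ.eigenvalues with hd_def
  have hU1 : Uᴴ * U = 1 := by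
    rw [← star_eq_conjTranspose]
    exact Unitary.coe_star_mul_self hΔ.eigenvectorUnitary
  have hU2 : U * Uᴴ = 1 := by
    rw [← star_eq_conjTranspose]
    exact Unitary.coe_mul_star_self hΔ.eigenvectorUnitary
  have hspec : Δ = U * diagonal (fun i => (d i : ℂ)) * Uᴴ := by
    rw [← star_eq_conjTranspose]
    have := hΔ.spectral_theorem
    rw [Unitary.conjStarAlgAut_apply] at this
    exact this
  set sgn : n → ℂ := fun i => if d i < 0 then -1 else 1 with hsgn_def
  refine ⟨U * diagonal sgn * Uᴴ, ?_, ?_⟩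
  · have e1 : (U * diagonal sgn * Uᴴ)ᴴ = U * diagonal (star sgn) * Uᴴ := by
      simp [conjTranspose_mul, diagonal_conjTranspose, mul_assoc]
    rw [e1, mulmul U hU1]
    have e2 : sgn * star sgn = 1 := by
      funext i
      simp only [Pi.mul_apply, Pi.star_apply, hsgn_def, Pi.one_apply]
      rcases lt_or_ge (d i) 0 with h | h
      · rw [if_pos h]; simp
      · rw [if_neg (not_lt.2 h)]; simp
    rw [e2, show diagonal (1 : n → ℂ) = (1 : Matrix n n ℂ) by
      rw [← diagonal_one]; rfl, mul_one, hU2]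
  · have habs : ((fun i => (d i : ℂ)) * sgn) = fun i => ((|d i| : ℝ) : ℂ) := by
      funext i
      simp only [Pi.mul_apply, hsgn_def]
      rcases lt_or_ge (d i) 0 with h | h
      · rw [if_pos h, abs_of_neg h]; push_cast; ring
      · rw [if_neg (not_lt.2 h), abs_of_nonneg h]; ring
    have h1 : Δ * (U * diagonal sgn * Uᴴ) = U * diagonal (fun i => ((|d i| : ℝ) : ℂ)) * Uᴴ := by
      conv_lhs => rw [hspec]
      rw [mulmul U hU1, habs]
    have hPSDdiag : (diagonal (fun i => ((|d i| : ℝ) : ℂ))).PosSemidef := by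
      rw [posSemidef_diagonal_iff]
      intro i
      rw [show (((|d i| : ℝ) : ℂ)) = RCLike.ofReal (|d i|) from rfl]
      rw [@RCLike.ofReal_nonneg ℂ]
      exact abs_nonneg _
    have hP : (U * diagonal (fun i => ((|d i| : ℝ) : ℂ)) * Uᴴ).PosSemidef :=
      hPSDdiag.mul_mul_conjTranspose_same U
    have h2 : psdSqrt (Δᴴ * Δ) = U * diagonal (fun i => ((|d i| : ℝ) : ℂ)) * Uᴴ := by
      refine psdSqrt_of_sq (posSemidef_conjTranspose_mul_self Δ) hP ?_
      rw [mulmul U hU1, hΔ.eq]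
      conv_rhs => rw [hspec]
      rw [mulmul U hU1]
      have e3 : ((fun i => ((|d i| : ℝ) : ℂ)) * fun i => ((|d i| : ℝ) : ℂ))
          = ((fun i => (d i : ℂ)) * fun i => (d i : ℂ)) := by
        funext i
        simp only [Pi.mul_apply]
        rw [← Complex.ofReal_mul, ← Complex.ofReal_mul, abs_mul_abs_self]
      rw [e3]
    rw [traceNorm, h2, h1, traceUDU U hU1]

/-- Polar decomposition of a square complex matrix. -/
lemma exists_polar (M : Matrix n n ℂ) :
    ∃ V : Matrix n n ℂ, Vᴴ * V = 1 ∧ M = V * psdSqrt (Mᴴ * M) := by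
  have hC : (Mᴴ * M).PosSemidef := posSemidef_conjTranspose_mul_self M
  set hH : (Mᴴ * M).IsHermitian := hC.1 with hH_def
  set U : Matrix n n ℂ := (hH.eigenvectorUnitary : Matrix n n ℂ) with hU_def
  set d : n → ℝ := hH.eigenvalues with hd_def
  have hd : ∀ i, 0 ≤ d i := fun i => hC.eigenvalues_nonneg i
  have hU1 : Uᴴ * U = 1 := by
    rw [← star_eq_conjTranspose]
    exact Unitary.coe_star_mul_self hH.eigenvectorUnitary
  have hU2 : U * Uᴴ = 1 := by
    rw [← star_eq_conjTranspose]
    exact Unitary.coe_mul_star_self hH.eigenvectorUnitary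
  set N : Matrix n n ℂ := M * U with hN_def
  have hNN : Nᴴ * N = diagonal (fun i => (d i : ℂ)) := by
    rw [hN_def, conjTranspose_mul, show Uᴴ * Mᴴ * (M * U) = Uᴴ * (Mᴴ * M) * U by
      simp only [mul_assoc]]
    rw [← star_eq_conjTranspose]
    have hs := hH.spectral_theorem
    rw [Unitary.conjStarAlgAut_apply] at hs
    rw [hs]
    change Uᴴ * (U * diagonal (fun i => (d i : ℂ)) * Uᴴ) * U = _
    simp only [mul_assoc]
    rw [hU1, mul_one, ← mul_assoc, hU1, one_mul]
  have hcol : ∀ j, ∑ i, Complex.normSq (N i j) = d j := by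
    intro j
    have := congrFun (congrFun hNN j) j
    rw [Matrix.mul_apply, diagonal_apply_eq] at this
    have : ∑ i, ((starRingEnd ℂ) (N i j) * N i j) = (d j : ℂ) := this
    have := congrArg Complex.re this
    rw [Complex.re_sum, Complex.ofReal_re] at this
    rw [← this]
    refine Finset.sum_congr rfl fun i _ => ?_
    rw [← Complex.normSq_eq_conj_mul_self]
    rfl
  have hNzero : ∀ j, d j = 0 → ∀ i, N i j = 0 := by
    intro j hj i
    have h0 : ∑ i, Complex.normSq (N i j) = 0 := by rw [hcol j, hj]
    have := (Finset.sum_eq_zero_iff_of_nonneg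
      (fun i _ => Complex.normSq_nonneg (N i j))).1 h0 i (Finset.mem_univ i)
    exact Complex.normSq_eq_zero.1 this
  set w : n → EuclideanSpace ℂ n :=
    fun j => (WithLp.equiv 2 _).symm fun i => ((Real.sqrt (d j) : ℂ))⁻¹ * N i j with hw_def
  set s : Set n := {j | d j ≠ 0} with hs_def
  have horth : Orthonormal ℂ (s.restrict w) := by
    rw [orthonormal_iff_ite]
    intro i j
    have hinner : (inner ℂ (w i.1) (w j.1) : ℂ)
        = (starRingEnd ℂ) ((Real.sqrt (d i.1) : ℂ))⁻¹ * ((Real.sqrt (d j.1) : ℂ))⁻¹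
          * diagonal (fun k => (d k : ℂ)) i.1 j.1 := by
      rw [← hNN, Matrix.mul_apply]
      simp only [hw_def, PiLp.inner_apply, RCLike.inner_apply, WithLp.equiv_symm_apply, PiLp.toLp_apply,
        conjTranspose_apply, _root_.map_mul, RCLike.star_def]
      rw [Finset.mul_sum]
      refine Finset.sum_congr rfl fun k _ => ?_
      ring
    rcases eq_or_ne i j with rfl | hij
    · rw [if_pos rfl]
      show (inner ℂ (w i.1) (w i.1) : ℂ) = 1
      rw [hinner, diagonal_apply_eq]
      have hdi : d i.1 ≠ 0 := i.2
      have hsq : (Real.sqrt (d i.1) : ℂ) * (Real.sqrt (d i.1) : ℂ) = (d i.1 : ℂ) := by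
        rw [← Complex.ofReal_mul, Real.mul_self_sqrt (hd i.1)]
      rw [map_inv₀, Complex.conj_ofReal]
      field_simp
      rw [pow_two, hsq]
      exact div_self (Complex.ofReal_ne_zero.2 hdi)
    · rw [if_neg hij]
      show (inner ℂ (w i.1) (w j.1) : ℂ) = 0
      rw [hinner, diagonal_apply_ne _ (fun h => hij (Subtype.ext h)), mul_zero]
  obtain ⟨b, hb⟩ := horth.exists_orthonormalBasis_extension_of_card_eq
    (finrank_euclideanSpace (𝕜 := ℂ) (ι := n))
  set V₀ : Matrix n n ℂ := Matrix.of fun i j => b j i with hV₀_def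
  have hV₀ : V₀ᴴ * V₀ = 1 := by
    funext i j
    rw [Matrix.mul_apply]
    have : (inner ℂ (b i) (b j) : ℂ) = if i = j then 1 else 0 :=
      orthonormal_iff_ite.1 b.orthonormal i j
    rw [Matrix.one_apply, ← this]
    simp only [PiLp.inner_apply, RCLike.inner_apply, conjTranspose_apply, hV₀_def,
      Matrix.of_apply, RCLike.star_def]
    exact Finset.sum_congr rfl fun _ _ => mul_comm _ _
  have hkey : V₀ * diagonal (fun i => ((Real.sqrt (d i) : ℝ) : ℂ)) = N := by
    funext i j
    rw [Matrix.mul_apply]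
    rw [Finset.sum_eq_single j (fun k _ hk => by rw [diagonal_apply_ne _ hk, mul_zero])
      (fun h => absurd (Finset.mem_univ j) h)]
    rw [diagonal_apply_eq]
    rcases eq_or_ne (d j) 0 with hj | hj
    · rw [hj, Real.sqrt_zero, Complex.ofReal_zero, mul_zero, hNzero j hj i]
    · have hbj : b j = w j := hb j hj
      rw [hV₀_def]
      show (b j) i * _ = _
      rw [hbj, hw_def]
      show ((Real.sqrt (d j) : ℂ))⁻¹ * N i j * (Real.sqrt (d j) : ℂ) = N i j
      have : (Real.sqrt (d j) : ℂ) ≠ 0 := by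
        simpa using Real.sqrt_ne_zero'.2 (lt_of_le_of_ne (hd j) (Ne.symm hj))
      field_simp
  have hsqrt : psdSqrt (Mᴴ * M) = U * diagonal (fun i => ((Real.sqrt (d i) : ℝ) : ℂ)) * Uᴴ := by
    rw [psdSqrt, dif_pos hC]
    rfl
  refine ⟨V₀ * Uᴴ, ?_, ?_⟩
  · rw [conjTranspose_mul, conjTranspose_conjTranspose,
      show U * V₀ᴴ * (V₀ * Uᴴ) = U * (V₀ᴴ * V₀) * Uᴴ by simp only [mul_assoc], hV₀, mul_one, hU2]
  · rw [hsqrt, show V₀ * Uᴴ * (U * diagonal (fun i => ((Real.sqrt (d i) : ℝ) : ℂ)) * Uᴴ)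
      = V₀ * ((Uᴴ * U) * diagonal (fun i => ((Real.sqrt (d i) : ℝ) : ℂ))) * Uᴴ by
        simp only [mul_assoc], hU1, one_mul, hkey, hN_def, mul_assoc, hU2, mul_one]

end FvdG

/-- **Fuchs–van de Graaf.** For density operators `ρ₀, ρ₁` on a finite-dimensional
complex Hilbert space, `‖ρ₀ - ρ₁‖₁ ≤ 2·√(1 - F(ρ₀,ρ₁)²)`. -/
theorem traceNorm_sub_le_fuchs_van_de_graaf
    {W : Type*} [Fintype W] [DecidableEq W] (ρ₀ ρ₁ : Matrix W W ℂ)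
    (h₀ : ρ₀.PosSemidef) (h₁ : ρ₁.PosSemidef)
    (t₀ : ρ₀.trace = 1) (t₁ : ρ₁.trace = 1) :
    traceNorm (ρ₀ - ρ₁) ≤ 2 * Real.sqrt (1 - fidelity ρ₀ ρ₁ ^ 2) := by
  classical
  set A : Matrix W W ℂ := psdSqrt ρ₀ with hA_def
  set B : Matrix W W ℂ := psdSqrt ρ₁ with hB_def
  have hA : A.PosSemidef := FvdG.psdSqrt_posSemidef h₀
  have hB : B.PosSemidef := FvdG.psdSqrt_posSemidef h₁
  have hAA : A * A = ρ₀ := by rw [hA_def]; exact FvdG.psdSqrt_mul_self h₀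
  have hBB : B * B = ρ₁ := by rw [hB_def]; exact FvdG.psdSqrt_mul_self h₁
  obtain ⟨V, hV, hpol⟩ := FvdG.exists_polar (A * B)
  set R : Matrix W W ℂ := psdSqrt ((A * B)ᴴ * (A * B)) with hR_def
  have hR : R.PosSemidef :=
    FvdG.psdSqrt_posSemidef (posSemidef_conjTranspose_mul_self (A * B))
  have hF : fidelity ρ₀ ρ₁ = (R.trace).re := rfl
  set F : ℝ := fidelity ρ₀ ρ₁ with hF_def
  set Y : Matrix W W ℂ := V * B with hY_def
  have hYY : Yᴴ * Y = ρ₁ := by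
    rw [hY_def, conjTranspose_mul, show Bᴴ * Vᴴ * (V * B) = Bᴴ * (Vᴴ * V) * B by
      simp only [mul_assoc], hV, mul_one, hB.1.eq, hBB]
  have hXX : Aᴴ * A = ρ₀ := by rw [hA.1.eq, hAA]
  have hXY : ((Aᴴ * Y).trace) = R.trace := by
    rw [hA.1.eq, hY_def, ← mul_assoc, trace_mul_comm]
    rw [show B * (A * V) = (A * B)ᴴ * V by
      rw [conjTranspose_mul, hA.1.eq, hB.1.eq, mul_assoc]]
    rw [hpol, conjTranspose_mul, hR.1.eq, mul_assoc, hV, mul_one]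
  -- trace facts
  have htr₀ : ((Aᴴ * A).trace).re = 1 := by rw [hXX, t₀]; rfl
  have htr₁ : ((Yᴴ * Y).trace).re = 1 := by rw [hYY, t₁]; rfl
  have htrXY : ((Aᴴ * Y).trace).re = F := by rw [hXY]; exact hF.symm
  have htrYX : ((Yᴴ * A).trace).re = F := by
    have : Yᴴ * A = (Aᴴ * Y)ᴴ := by rw [conjTranspose_mul Aᴴ Y, conjTranspose_conjTranspose]
    rw [this, Matrix.trace_conjTranspose, Complex.star_def, Complex.conj_re, htrXY]
  set P : Matrix W W ℂ := A + Y with hP_def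
  set Q : Matrix W W ℂ := A - Y with hQ_def
  have hfP : FvdG.frobSq P = 2 + 2 * F := by
    rw [FvdG.frobSq, hP_def, conjTranspose_add, add_mul, mul_add, mul_add,
      trace_add, trace_add, trace_add]
    simp only [Complex.add_re]
    rw [htr₀, htr₁, htrXY, htrYX]; ring
  have hfQ : FvdG.frobSq Q = 2 - 2 * F := by
    rw [FvdG.frobSq, hQ_def, conjTranspose_sub, sub_mul, mul_sub, mul_sub,
      trace_sub, trace_sub, trace_sub]
    simp only [Complex.sub_re]
    rw [htr₀, htr₁, htrXY, htrYX]; ring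
  -- the decomposition of ρ₀ - ρ₁
  have hdecomp : (2 : ℂ) • (ρ₀ - ρ₁) = Pᴴ * Q + Qᴴ * P := by
    rw [← hXX, ← hYY, hP_def, hQ_def, conjTranspose_add, conjTranspose_sub]
    rw [add_mul, mul_sub, mul_sub, sub_mul, mul_add, mul_add]
    rw [two_smul]
    abel
  obtain ⟨S, hS, hSdual⟩ := FvdG.exists_sign_dual (ρ₀ - ρ₁) (h₀.1.sub h₁.1)
  have key : 2 * traceNorm (ρ₀ - ρ₁)
      ≤ 2 * (Real.sqrt (FvdG.frobSq P) * Real.sqrt (FvdG.frobSq Q)) := by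
    have e1 : ((2 : ℂ) • (ρ₀ - ρ₁) * S).trace.re = 2 * traceNorm (ρ₀ - ρ₁) := by
      rw [smul_mul_assoc, trace_smul, smul_eq_mul]
      rw [show ((2 : ℂ) * ((ρ₀ - ρ₁) * S).trace).re
        = 2 * ((ρ₀ - ρ₁) * S).trace.re by simp [Complex.mul_re], hSdual]
    have e2 : ((2 : ℂ) • (ρ₀ - ρ₁) * S).trace.re
        = (Pᴴ * (Q * S)).trace.re + (Qᴴ * (P * S)).trace.re := by
      rw [hdecomp, add_mul, trace_add, Complex.add_re, mul_assoc, mul_assoc]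
    rw [← e1, e2]
    have b1 := FvdG.re_trace_le P (Q * S)
    have b2 := FvdG.re_trace_le Q (P * S)
    rw [FvdG.frobSq_mul_coisometry Q S hS] at b1
    rw [FvdG.frobSq_mul_coisometry P S hS] at b2
    calc (Pᴴ * (Q * S)).trace.re + (Qᴴ * (P * S)).trace.re
        ≤ Real.sqrt (FvdG.frobSq P) * Real.sqrt (FvdG.frobSq Q)
          + Real.sqrt (FvdG.frobSq Q) * Real.sqrt (FvdG.frobSq P) := add_le_add b1 b2
      _ = 2 * (Real.sqrt (FvdG.frobSq P) * Real.sqrt (FvdG.frobSq Q)) := by ring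
  have hPnn : (0 : ℝ) ≤ 2 + 2 * F := hfP ▸ FvdG.frobSq_nonneg P
  have final : Real.sqrt (FvdG.frobSq P) * Real.sqrt (FvdG.frobSq Q)
      = 2 * Real.sqrt (1 - F ^ 2) := by
    rw [hfP, hfQ, ← Real.sqrt_mul hPnn]
    rw [show (2 + 2 * F) * (2 - 2 * F) = 4 * (1 - F ^ 2) by ring]
    rw [Real.sqrt_mul (by norm_num : (0:ℝ) ≤ 4),
      show Real.sqrt 4 = 2 by
        rw [show (4:ℝ) = 2 ^ 2 by norm_num, Real.sqrt_sq (by norm_num : (0:ℝ) ≤ 2)]]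
  rw [final] at key
  linarith
end
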